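/- For every bounded measurable outcome model m : ℝ^p → ℝ (possibly misspecified), the augmented estimand is exactly unbiased for the treatment-arm RMST: E[1{Z=1} δ* (Y − m(X)) / (π G(Y))] + E[m(X)] = E[min(T(1), t*)]; in particular the identity holds regardless of the choice of m, demonstrating robustness of the augmented estimator to outcome-model misspecification. -/

import Mathlib

open MeasureTheory ProbabilityTheory

theorem augmented_estimand_robust_to_outcome_model
    {Ω : Type*} [mΩ : MeasurableSpace Ω] (P : Measure Ω) [IsProbabilityMeasure P]
    {p : ℕ} (T1 T0 C Z : Ω → ℝ) (X : Ω → (Fin p → ℝ))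
    (hT1 : Measurable T1) (hT0 : Measurable T0) (hC : Measurable C)
    (hZ : Measurable Z) (hX : Measurable X)
    (hT1nonneg : ∀ ω, 0 ≤ T1 ω) (hT0nonneg : ∀ ω, 0 ≤ T0 ω)
    (hZ01 : ∀ ω, Z ω = 0 ∨ Z ω = 1)
    (π : ℝ) (hπ : (P {ω | Z ω = 1}).toReal = π) (hπ0 : 0 < π) (hπ1 : π < 1)
    (tstar : ℝ) (htstar : 0 < tstar)
    (hZind : IndepFun Z (fun ω => (T1 ω, T0 ω, X ω)) P)
    (hCind : IndepFun C (fun ω => (Z ω, T1 ω, T0 ω, X ω)) P)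
    (hatom : ∀ c : ℝ, P {ω | C ω = c} = 0)
    (G : ℝ → ℝ) (hG : ∀ y, G y = (P {ω | y < C ω}).toReal) (hGt : 0 < G tstar)
    (T Y δs : Ω → ℝ)
    (hT : ∀ ω, T ω = Z ω * T1 ω + (1 - Z ω) * T0 ω)
    (hY : ∀ ω, Y ω = min (T ω) tstar)
    (hδs : ∀ ω, δs ω = if Y ω ≤ C ω then 1 else 0) :
    ∀ m : (Fin p → ℝ) → ℝ, Measurable m → (∃ K : ℝ, ∀ x, |m x| ≤ K) →
      (∫ ω, (if Z ω = 1 then (1 : ℝ) else 0) * δs ω * (Y ω - m (X ω)) / (π * G (Y ω)) ∂P)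
        + ∫ ω, m (X ω) ∂P
      = ∫ ω, min (T1 ω) tstar ∂P := by
  rintro m hm ⟨K, hK⟩
  have hπne : π ≠ 0 := ne_of_gt hπ0
  have hKnn : (0:ℝ) ≤ K := le_trans (abs_nonneg _) (hK (fun _ => 0))
  -- facts about G
  have hGanti : Antitone G := by
    intro a b hab
    rw [hG, hG]
    refine ENNReal.toReal_mono (measure_ne_top _ _) (measure_mono ?_)
    intro ω hω
    exact lt_of_le_of_lt hab hω
  have hGmeas : Measurable G := hGanti.measurable
  have hGpos : ∀ y, y ≤ tstar → 0 < G y := fun y hy => lt_of_lt_of_le hGt (hGanti hy)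
  -- the clamped time function
  set yf : ℝ → ℝ := fun t => min (max t 0) tstar with hyf
  have hyfmeas : Measurable yf := (measurable_id.max measurable_const).min measurable_const
  have hyfle : ∀ t, yf t ≤ tstar := fun t => min_le_right _ _
  have hyfnn : ∀ t, 0 ≤ yf t := fun t => le_min (le_max_right _ _) (le_of_lt htstar)
  have hyfT1 : ∀ ω, yf (T1 ω) = min (T1 ω) tstar := fun ω => by
    simp [hyf, max_eq_left (hT1nonneg ω)]
  -- the joint variable
  set W : Ω → ℝ × ℝ × ℝ × (Fin p → ℝ) := fun ω => (Z ω, T1 ω, T0 ω, X ω) with hWdef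
  have hWmeas : Measurable W := hZ.prodMk (hT1.prodMk (hT0.prodMk hX))
  set μC : Measure ℝ := P.map C with hμC
  set μW : Measure (ℝ × ℝ × ℝ × (Fin p → ℝ)) := P.map W with hμW
  have hμCprob : IsProbabilityMeasure μC := Measure.isProbabilityMeasure_map hC.aemeasurable
  have hμWprob : IsProbabilityMeasure μW := Measure.isProbabilityMeasure_map hWmeas.aemeasurable
  -- the integrand as a function on the product space
  set H : ℝ × (ℝ × ℝ × ℝ × (Fin p → ℝ)) → ℝ := fun q =>
    if q.2.1 = 1 then
      (if yf q.2.2.1 ≤ q.1 then 1 else 0) * (yf q.2.2.1 - m q.2.2.2.2)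
        / (π * G (yf q.2.2.1))
    else 0 with hHdef
  have hHmeas : Measurable H := by
    refine Measurable.ite ?_ ?_ measurable_const
    · exact (measurable_fst.comp measurable_snd) (measurableSet_singleton 1)
    · refine Measurable.div ?_ ?_
      · refine Measurable.mul ?_ ?_
        · refine Measurable.ite ?_ measurable_const measurable_const
          exact measurableSet_le (hyfmeas.comp (measurable_fst.comp (measurable_snd.comp measurable_snd))) measurable_fst
        · exact (hyfmeas.comp (measurable_fst.comp (measurable_snd.comp measurable_snd))).sub
            (hm.comp (measurable_snd.comp (measurable_snd.comp (measurable_snd.comp measurable_snd))))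
      · exact measurable_const.mul
          (hGmeas.comp (hyfmeas.comp (measurable_fst.comp (measurable_snd.comp measurable_snd))))
  -- boundedness of H
  set B : ℝ := (tstar + K) / (π * G tstar) with hBdef
  have hBnn : 0 ≤ B := div_nonneg (by linarith) (le_of_lt (mul_pos hπ0 hGt))
  have hHbound : ∀ q, |H q| ≤ B := by
    intro q
    by_cases hq : q.2.1 = 1
    · simp only [hHdef, hq, if_pos]
      set y := yf q.2.2.1 with hy
      have hy2 : y ≤ tstar := hyfle _
      have hy1 : 0 ≤ y := hyfnn _
      have hGy : 0 < G y := hGpos _ hy2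
      have hden : 0 < π * G y := mul_pos hπ0 hGy
      rw [abs_div, abs_of_pos hden]
      have hnum : |(if y ≤ q.1 then (1:ℝ) else 0) * (y - m q.2.2.2.2)| ≤ tstar + K := by
        rw [abs_mul]
        have h1 : |(if y ≤ q.1 then (1:ℝ) else 0)| ≤ 1 := by
          by_cases h : y ≤ q.1 <;> simp [h]
        have h2 : |y - m q.2.2.2.2| ≤ tstar + K := by
          have := abs_sub (y) (m q.2.2.2.2)
          have hay : |y| ≤ tstar := by rw [abs_of_nonneg hy1]; exact hy2
          have ham : |m q.2.2.2.2| ≤ K := hK _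
          calc |y - m q.2.2.2.2| ≤ |y| + |m q.2.2.2.2| := abs_sub _ _
            _ ≤ tstar + K := add_le_add hay ham
        calc |(if y ≤ q.1 then (1:ℝ) else 0)| * |y - m q.2.2.2.2|
            ≤ 1 * (tstar + K) := mul_le_mul h1 h2 (abs_nonneg _) zero_le_one
          _ = tstar + K := one_mul _
      have hden' : 0 < π * G tstar := mul_pos hπ0 hGt
      have hGle : π * G tstar ≤ π * G y :=
        mul_le_mul_of_nonneg_left (hGanti hy2) (le_of_lt hπ0)
      calc |(if y ≤ q.1 then (1:ℝ) else 0) * (y - m q.2.2.2.2)| / (π * G y)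
          ≤ (tstar + K) / (π * G tstar) := by gcongr
        _ = B := rfl
    · simp only [hHdef, hq, if_neg, abs_zero]
      simpa using hBnn
  have hHint : Integrable H (μC.prod μW) := by
    refine Integrable.mono' (integrable_const B) hHmeas.aestronglyMeasurable ?_
    exact Filter.Eventually.of_forall fun q => by rw [Real.norm_eq_abs]; exact hHbound q
  -- the censoring survival identity
  have hIci : ∀ y : ℝ, (μC (Set.Ici y)).toReal = G y := by
    intro y
    rw [hμC, Measure.map_apply hC measurableSet_Ici]
    have hset : C ⁻¹' Set.Ici y = {ω | y < C ω} ∪ {ω | C ω = y} := by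
      ext ω
      simp only [Set.mem_preimage, Set.mem_Ici, Set.mem_union, Set.mem_setOf_eq]
      constructor
      · intro h
        rcases lt_or_eq_of_le h with h' | h'
        · exact Or.inl h'
        · exact Or.inr h'.symm
      · rintro (h | h)
        · exact le_of_lt h
        · exact le_of_eq h.symm
    rw [hset, measure_union ?_ (show MeasurableSet {ω | C ω = y} from hC (measurableSet_singleton y)), hatom, add_zero, hG]
    · rw [Set.disjoint_left]
      intro ω h₁ h₂
      simp only [Set.mem_setOf_eq] at h₁ h₂
      exact absurd (h₂ ▸ h₁) (lt_irrefl y)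
  -- inner integral computation
  set g : ℝ × ℝ × ℝ × (Fin p → ℝ) → ℝ := fun w =>
    if w.1 = 1 then (yf w.2.1 - m w.2.2.2) / π else 0 with hgdef
  have hgmeas : Measurable g := by
    refine Measurable.ite (measurable_fst (measurableSet_singleton 1)) ?_ measurable_const
    exact ((hyfmeas.comp (measurable_fst.comp measurable_snd)).sub
      (hm.comp (measurable_snd.comp (measurable_snd.comp measurable_snd)))).div_const π
  have hInner : ∀ w, (∫ c, H (c, w) ∂μC) = g w := by
    intro w
    by_cases hw : w.1 = 1
    · have hGy : 0 < G (yf w.2.1) := hGpos _ (hyfle _)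
      have heq : (fun c => H (c, w)) =
          fun c => (Set.Ici (yf w.2.1)).indicator
            (fun _ => (yf w.2.1 - m w.2.2.2) / (π * G (yf w.2.1))) c := by
        funext c
        by_cases hc : yf w.2.1 ≤ c <;>
          simp [hHdef, hw, hc, Set.indicator, Set.mem_Ici]
      rw [heq, integral_indicator_const _ measurableSet_Ici, measureReal_def, hIci, smul_eq_mul,
        hgdef]
      simp only [hw, if_pos]
      field_simp
    · have heq : (fun c => H (c, w)) = fun _ => (0:ℝ) := by
        funext c; simp [hHdef, hw]
      rw [heq, integral_zero, hgdef]
      simp [hw]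
  -- product-measure identity from independence of C
  have hmap : P.map (fun ω => (C ω, W ω)) = μC.prod μW :=
    (indepFun_iff_map_prod_eq_prod_map_map hC.aemeasurable hWmeas.aemeasurable).mp hCind
  -- pointwise identification of the original integrand with H ∘ (C, W)
  have hpt : ∀ ω, (if Z ω = 1 then (1:ℝ) else 0) * δs ω * (Y ω - m (X ω)) / (π * G (Y ω))
      = H (C ω, W ω) := by
    intro ω
    rcases hZ01 ω with h0 | h1
    · have : Z ω ≠ 1 := by rw [h0]; norm_num
      simp [hHdef, hWdef, this]
    · have hYω : Y ω = min (T1 ω) tstar := by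
        rw [hY, hT, h1]; norm_num
      simp only [hHdef, hWdef, h1, if_pos, hδs, hYω, hyfT1 ω, one_mul]
  -- the Z-side functions
  set φ : ℝ → ℝ := fun z => if z = 1 then 1 else 0 with hφdef
  set ψ : ℝ × ℝ × (Fin p → ℝ) → ℝ := fun v => (yf v.1 - m v.2.2) / π with hψdef
  set V : Ω → ℝ × ℝ × (Fin p → ℝ) := fun ω => (T1 ω, T0 ω, X ω) with hVdef
  have hφmeas : Measurable φ := by
    refine Measurable.ite (measurableSet_singleton 1) measurable_const measurable_const
  have hψmeas : Measurable ψ := by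
    exact ((hyfmeas.comp measurable_fst).sub
      (hm.comp (measurable_snd.comp measurable_snd))).div_const π
  have hgW : ∀ ω, g (W ω) = φ (Z ω) * ψ (V ω) := by
    intro ω
    by_cases h : Z ω = 1 <;> simp [hgdef, hφdef, hψdef, hWdef, hVdef, h]
  have hindφψ : IndepFun (φ ∘ Z) (ψ ∘ V) P := hZind.comp hφmeas hψmeas
  have hmul : (∫ ω, φ (Z ω) * ψ (V ω) ∂P) = (∫ ω, φ (Z ω) ∂P) * ∫ ω, ψ (V ω) ∂P := by
    have := hindφψ.integral_mul_eq_mul_integral ((hφmeas.comp hZ).aestronglyMeasurable)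
      ((hψmeas.comp (hT1.prodMk (hT0.prodMk hX))).aestronglyMeasurable)
    simpa [Function.comp, Pi.mul_apply] using this
  have hφZ : (∫ ω, φ (Z ω) ∂P) = π := by
    have heq : (fun ω => φ (Z ω)) = fun ω => ({ω | Z ω = 1}).indicator 1 ω := by
      funext ω
      by_cases h : Z ω = 1 <;> simp [hφdef, h, Set.indicator]
    rw [heq, integral_indicator_one (show MeasurableSet {ω | Z ω = 1} from hZ (measurableSet_singleton 1)), measureReal_def, hπ]
  have hintT1 : Integrable (fun ω => min (T1 ω) tstar) P := by
    refine Integrable.mono' (integrable_const tstar) ((hT1.min measurable_const).aestronglyMeasurable) ?_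
    refine Filter.Eventually.of_forall fun ω => ?_
    rw [Real.norm_eq_abs, abs_of_nonneg (le_min (hT1nonneg ω) (le_of_lt htstar))]
    exact min_le_right _ _
  have hintmX : Integrable (fun ω => m (X ω)) P := by
    refine Integrable.mono' (integrable_const K) ((hm.comp hX).aestronglyMeasurable) ?_
    exact Filter.Eventually.of_forall fun ω => by rw [Real.norm_eq_abs]; exact hK _
  have hψV : (∫ ω, ψ (V ω) ∂P)
      = ((∫ ω, min (T1 ω) tstar ∂P) - ∫ ω, m (X ω) ∂P) / π := by
    have heq : (fun ω => ψ (V ω)) = fun ω => (min (T1 ω) tstar - m (X ω)) / π := by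
      funext ω; simp [hψdef, hVdef, hyfT1 ω]
    rw [heq, integral_div, integral_sub hintT1 hintmX]
  -- main chain
  have hmain : (∫ ω, (if Z ω = 1 then (1:ℝ) else 0) * δs ω * (Y ω - m (X ω)) / (π * G (Y ω)) ∂P)
      = (∫ ω, min (T1 ω) tstar ∂P) - ∫ ω, m (X ω) ∂P := by
    calc (∫ ω, (if Z ω = 1 then (1:ℝ) else 0) * δs ω * (Y ω - m (X ω)) / (π * G (Y ω)) ∂P)
        = ∫ ω, H (C ω, W ω) ∂P := integral_congr_ae (Filter.Eventually.of_forall hpt)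
      _ = ∫ q, H q ∂(μC.prod μW) := by
          rw [← hmap]
          exact (integral_map (hC.prodMk hWmeas).aemeasurable
            (hHmeas.aestronglyMeasurable)).symm
      _ = ∫ w, (∫ c, H (c, w) ∂μC) ∂μW := integral_prod_symm H hHint
      _ = ∫ w, g w ∂μW := integral_congr_ae (Filter.Eventually.of_forall hInner)
      _ = ∫ ω, g (W ω) ∂P := by
          rw [hμW]
          exact integral_map hWmeas.aemeasurable hgmeas.aestronglyMeasurable
      _ = ∫ ω, φ (Z ω) * ψ (V ω) ∂P := integral_congr_ae (Filter.Eventually.of_forall hgW)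
      _ = (∫ ω, φ (Z ω) ∂P) * ∫ ω, ψ (V ω) ∂P := hmul
      _ = π * (((∫ ω, min (T1 ω) tstar ∂P) - ∫ ω, m (X ω) ∂P) / π) := by rw [hφZ, hψV]
      _ = (∫ ω, min (T1 ω) tstar ∂P) - ∫ ω, m (X ω) ∂P := by field_simp
  rw [hmain]
  ring
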